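/- Let g be a finite-dimensional Lie algebra and ρ_i : g → End(V_i) (i = 1, 2) finite-dimensional representations. Then the following are equivalent: (1) there exists (v₁, v₂) ∈ V₁ ⊕ V₂ with {(ρ₁(x)v₁, ρ₂(x)v₂) : x ∈ g} = V₁ ⊕ V₂; (2) there exists v₁ ∈ V₁ with {ρ₁(x)v₁ : x ∈ g} = V₁ and, for h = {x ∈ g : ρ₁(x)v₁ = 0} the isotropy subalgebra, there exists v₂ ∈ V₂ with {ρ₂(x)v₂ : x ∈ h} = V₂. -/

import Mathlib

attribute [local instance 100] LieRing.ofAssociativeRing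

/-- A direct sum `(g, ρ₁ ⊕ ρ₂, V₁ ⊕ V₂)` is a prehomogeneous vector space iff
`(g, ρ₁, V₁)` is, and the restriction of `ρ₂` to the isotropy subalgebra of a
generic point of `ρ₁` is a prehomogeneous vector space. -/
theorem directSum_PV_iff {g : Type*} [LieRing g] [LieAlgebra ℂ g]
    [FiniteDimensional ℂ g]
    {V₁ : Type*} [AddCommGroup V₁] [Module ℂ V₁] [FiniteDimensional ℂ V₁]
    {V₂ : Type*} [AddCommGroup V₂] [Module ℂ V₂] [FiniteDimensional ℂ V₂]
    (ρ₁ : g →ₗ⁅ℂ⁆ Module.End ℂ V₁) (ρ₂ : g →ₗ⁅ℂ⁆ Module.End ℂ V₂) :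
    (∃ (v₁ : V₁) (v₂ : V₂), ∀ (w₁ : V₁) (w₂ : V₂), ∃ x : g,
        ρ₁ x v₁ = w₁ ∧ ρ₂ x v₂ = w₂)
    ↔ (∃ v₁ : V₁, (∀ w₁ : V₁, ∃ x : g, ρ₁ x v₁ = w₁) ∧
        ∃ v₂ : V₂, ∀ w₂ : V₂, ∃ x : g, ρ₁ x v₁ = 0 ∧ ρ₂ x v₂ = w₂) := by
  constructor
  · rintro ⟨v₁, v₂, h⟩
    refine ⟨v₁, fun w₁ => ?_, v₂, fun w₂ => ?_⟩
    · obtain ⟨x, hx, -⟩ := h w₁ 0; exact ⟨x, hx⟩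
    · exact h 0 w₂
  · rintro ⟨v₁, h₁, v₂, h₂⟩
    refine ⟨v₁, v₂, fun w₁ w₂ => ?_⟩
    obtain ⟨x, hx⟩ := h₁ w₁
    obtain ⟨y, hy0, hy⟩ := h₂ (w₂ - ρ₂ x v₂)
    refine ⟨x + y, ?_, ?_⟩
    · rw [map_add ρ₁, LinearMap.add_apply, hx, hy0, add_zero]
    · rw [map_add ρ₂, LinearMap.add_apply, hy]
      abel
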